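/- Suppose n = 2 and |A| = 2. Then there exists a feasible family attaining the supremum of the single-type problem consisting of at most two posteriors {η^s, η^t} (with weights φ_s, φ_t ≥ 0, φ_s·η^s + φ_t·η^t = θ) such that η^s is a point mass, i.e., η^s = (1,0) or η^s = (0,1); in particular C(η^s) = 0, so under the corresponding optimal advertising rule the buyer learns the state exactly upon receiving signal s and is charged price p_s = 0. -/
import Mathlib


open Finset
open scoped Classical

noncomputable section

/-- The probability simplex in `ℝ^n`. -/
def simplex (n : ℕ) : Set (Fin n → ℝ) :=
  {η | (∀ ω, 0 ≤ η ω) ∧ ∑ ω, η ω = 1}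

variable {A : Type*} [Fintype A] [Nonempty A]

/-- `u*(ω) = max_{a ∈ A} u(ω, a)`. -/
def uStar (u : Fin 2 → A → ℝ) (ω : Fin 2) : ℝ :=
  Finset.univ.sup' Finset.univ_nonempty (u ω)

/-- The cost of uncertainty `C(η)`. -/
def Cost (u : Fin 2 → A → ℝ) (η : Fin 2 → ℝ) : ℝ :=
  ∑ ω, η ω * uStar u ω
    - Finset.univ.sup' Finset.univ_nonempty (fun a => ∑ ω, η ω * u ω a)

/-- The likelihood ratio `R(η) = Σ_ω μ_ω η_ω / θ_ω`. -/
def Ratio (μ θ η : Fin 2 → ℝ) : ℝ := ∑ ω, μ ω * η ω / θ ω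

/-- The set of feasible objective values of the single-type problem. -/
def ConcaveSet (u : Fin 2 → A → ℝ) (μ θ : Fin 2 → ℝ) : Set ℝ :=
  {v | ∃ (m : ℕ) (φ : Fin m → ℝ) (η : Fin m → Fin 2 → ℝ),
    (∀ s, 0 ≤ φ s) ∧ (∀ s, η s ∈ simplex 2) ∧
    (∀ ω, ∑ s, φ s * η s ω = θ ω) ∧
    v = ∑ s, φ s * Ratio μ θ (η s) * Cost u (η s)}

lemma cost_rep (hA : Fintype.card A = 2) (u : Fin 2 → A → ℝ) :
    ∃ A₀ B₀ : ℝ, 0 ≤ A₀ ∧ 0 ≤ B₀ ∧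
      ∀ η ∈ simplex 2, Cost u η = min (A₀ * η 0) (B₀ * η 1) := by
  classical
  obtain ⟨a0, -, ha0⟩ := Finset.exists_mem_eq_sup' Finset.univ_nonempty (u 0)
  obtain ⟨a1, -, ha1⟩ := Finset.exists_mem_eq_sup' Finset.univ_nonempty (u 1)
  have e0 : uStar u 0 = u 0 a0 := ha0
  have e1 : uStar u 1 = u 1 a1 := ha1
  have hle : ∀ (ω : Fin 2) (a : A), u ω a ≤ uStar u ω := fun ω a =>
    Finset.le_sup' (u ω) (Finset.mem_univ a)
  have hub : ∀ η ∈ simplex 2, ∀ a : A, ∑ ω, η ω * u ω a ≤ ∑ ω, η ω * uStar u ω := by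
    intro η hη a
    exact Finset.sum_le_sum fun ω _ => mul_le_mul_of_nonneg_left (hle ω a) (hη.1 ω)
  by_cases hne : a0 = a1
  · subst hne
    refine ⟨0, 0, le_refl 0, le_refl 0, fun η hη => ?_⟩
    have h1 : ∑ ω, η ω * u ω a0 = ∑ ω, η ω * uStar u ω := by
      rw [Fin.sum_univ_two, Fin.sum_univ_two, e0, e1]
    have h2 : ∑ ω, η ω * uStar u ω ≤
        Finset.univ.sup' Finset.univ_nonempty (fun a => ∑ ω, η ω * u ω a) := by
      rw [← h1]
      exact Finset.le_sup' (fun a => ∑ ω, η ω * u ω a) (Finset.mem_univ a0)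
    have h3 := Finset.sup'_le Finset.univ_nonempty (fun a => ∑ ω, η ω * u ω a)
      (fun a _ => hub η hη a)
    simp only [Cost]
    have h4 : Finset.univ.sup' Finset.univ_nonempty (fun a => ∑ ω, η ω * u ω a) =
        ∑ ω, η ω * uStar u ω := le_antisymm h3 h2
    rw [h4]
    simp
  · -- two distinct actions : univ = {a0, a1}
    have huniv : ∀ b : A, b = a0 ∨ b = a1 := by
      intro b
      have h : ({a0, a1} : Finset A) = Finset.univ := by
        apply Finset.eq_of_subset_of_card_le (Finset.subset_univ _)
        rw [Finset.card_univ, hA, Finset.card_pair hne]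
      have hb : b ∈ ({a0, a1} : Finset A) := h ▸ Finset.mem_univ b
      simpa using hb
    have hsup : ∀ f : A → ℝ, Finset.univ.sup' Finset.univ_nonempty f = max (f a0) (f a1) := by
      intro f
      apply le_antisymm
      · apply Finset.sup'_le
        intro b _
        rcases huniv b with rfl | rfl
        · exact le_max_left _ _
        · exact le_max_right _ _
      · exact max_le (Finset.le_sup' f (Finset.mem_univ a0))
          (Finset.le_sup' f (Finset.mem_univ a1))
    refine ⟨uStar u 0 - u 0 a1, uStar u 1 - u 1 a0,
      sub_nonneg.2 (hle 0 a1), sub_nonneg.2 (hle 1 a0), fun η hη => ?_⟩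
    have k1 : (∑ ω, η ω * uStar u ω) - (∑ ω, η ω * u ω a1) = (uStar u 0 - u 0 a1) * η 0 := by
      rw [Fin.sum_univ_two, Fin.sum_univ_two, e1]; ring
    have k2 : (∑ ω, η ω * uStar u ω) - (∑ ω, η ω * u ω a0) = (uStar u 1 - u 1 a0) * η 1 := by
      rw [Fin.sum_univ_two, Fin.sum_univ_two, e0]; ring
    calc Cost u η
        = min ((∑ ω, η ω * uStar u ω) - ∑ ω, η ω * u ω a0)
            ((∑ ω, η ω * uStar u ω) - ∑ ω, η ω * u ω a1) := by
          rw [Cost, hsup fun a => ∑ ω, η ω * u ω a, ← min_sub_sub_left]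
      _ = min ((uStar u 0 - u 0 a1) * η 0) ((uStar u 1 - u 1 a0) * η 1) := by
          rw [k1, k2, min_comm]


/-- Core 1-D lemma (case `q ≤ p`): optimal two-point representation with vertex `0`. -/
lemma core1d (p q A B t : ℝ) (hq : 0 ≤ q) (hpq : q ≤ p)
    (hA : 0 ≤ A) (hB : 0 ≤ B) (ht0 : 0 < t) (ht1 : t < 1) :
    ∃ y φy α β : ℝ, 0 ≤ y ∧ y ≤ 1 ∧ 0 ≤ φy ∧ φy ≤ 1 ∧ φy * y = t ∧
      (∀ x, 0 ≤ x → x ≤ 1 →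
        (q + (p - q) * x) * min (A * x) (B * (1 - x)) ≤ α + β * x) ∧
      α + β * t = φy * ((q + (p - q) * y) * min (A * y) (B * (1 - y))) := by
  have hc : 0 ≤ p - q := sub_nonneg.2 hpq
  rcases eq_or_lt_of_le hA with hA0 | hA0
  · -- A = 0 : Cost vanishes
    refine ⟨t, 1, 0, 0, le_of_lt ht0, le_of_lt ht1, zero_le_one, le_refl 1, one_mul t, ?_, ?_⟩
    · intro x hx0 hx1
      rw [← hA0, zero_mul, min_eq_left (mul_nonneg hB (by linarith))]
      simp
    · rw [← hA0, zero_mul, min_eq_left (mul_nonneg hB (by linarith))]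
      ring
  rcases eq_or_lt_of_le hB with hB0 | hB0
  · -- B = 0
    refine ⟨t, 1, 0, 0, le_of_lt ht0, le_of_lt ht1, zero_le_one, le_refl 1, one_mul t, ?_, ?_⟩
    · intro x hx0 hx1
      rw [← hB0, zero_mul, min_eq_right (mul_nonneg hA hx0)]
      · simp
    · rw [← hB0, zero_mul, min_eq_right (by nlinarith)]
      ring
  -- main case : A > 0, B > 0
  have hAB : 0 < A + B := by linarith
  set X : ℝ := B / (A + B) with hXdef
  have hX0 : 0 < X := div_pos hB0 hAB
  have hXne : X ≠ 0 := ne_of_gt hX0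
  have hX1 : X < 1 := (div_lt_one hAB).2 (by linarith)
  have hXid : X * (A + B) = B := div_mul_cancel₀ B (ne_of_gt hAB)
  by_cases hts : t ≤ X
  · -- chord from 0 to the kink X
    refine ⟨X, t / X, 0, A * (q + (p - q) * X), le_of_lt hX0, le_of_lt hX1,
      le_of_lt (div_pos ht0 hX0), (div_le_one hX0).2 hts, div_mul_cancel₀ t hXne,
      ?_, ?_⟩
    · intro x hx0 hx1
      have hR : 0 ≤ q + (p - q) * x := add_nonneg hq (mul_nonneg hc hx0)
      rcases le_total x X with hxX | hxX
      · have h1 : (q + (p - q) * x) * min (A * x) (B * (1 - x)) ≤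
            (q + (p - q) * x) * (A * x) :=
          mul_le_mul_of_nonneg_left (min_le_left _ _) hR
        nlinarith [mul_nonneg (mul_nonneg hc (sub_nonneg.2 hxX)) (mul_nonneg hA hx0)]
      · have h1 : (q + (p - q) * x) * min (A * x) (B * (1 - x)) ≤
            (q + (p - q) * x) * (B * (1 - x)) :=
          mul_le_mul_of_nonneg_left (min_le_right _ _) hR
        have hxX' : B ≤ x * (A + B) := by
          rw [← hXid]; nlinarith
        have h3 : 0 ≤ (x * (A + B) - B) * ((A + B) * q + B * ((p - q) * x)) :=
          mul_nonneg (by linarith) (add_nonneg (mul_nonneg hAB.le hq)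
            (mul_nonneg hB (mul_nonneg hc hx0)))
        have hXq : A * (q + (p - q) * X) * x = A * (q * (A + B) + (p - q) * B) * x / (A + B) := by
          rw [hXdef]; field_simp
        have hkey : (q + (p - q) * x) * (B * (1 - x)) ≤ A * (q + (p - q) * X) * x := by
          rw [hXq, le_div_iff₀ hAB]
          nlinarith [h3]
        linarith [h1, hkey]
    · -- value equation
      have hmin : A * X = B * (1 - X) := by
        rw [hXdef]; field_simp; ring
      rw [← hmin, min_self]
      rw [show t / X * ((q + (p - q) * X) * (A * X)) =
        t * A * (q + (p - q) * X) * (X / X) from by ring, div_self hXne]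
      ring
  · -- t beyond the kink : tangent at t
    push_neg at hts
    refine ⟨t, 1, B * (q + (p - q) * t) * (1 - t) - (B * ((p - q) - q - 2 * (p - q) * t)) * t,
      B * ((p - q) - q - 2 * (p - q) * t), le_of_lt ht0, le_of_lt ht1, zero_le_one,
      le_refl 1, one_mul t, ?_, ?_⟩
    · intro x hx0 hx1
      have hR : 0 ≤ q + (p - q) * x := add_nonneg hq (mul_nonneg hc hx0)
      have h1 : (q + (p - q) * x) * min (A * x) (B * (1 - x)) ≤
          (q + (p - q) * x) * (B * (1 - x)) :=
        mul_le_mul_of_nonneg_left (min_le_right _ _) hR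
      nlinarith [mul_nonneg (mul_nonneg hB hc) (sq_nonneg (x - t))]
    · have hBt : B * (1 - t) ≤ A * t := by
        have : B < t * (A + B) := by rw [← hXid]; nlinarith
        nlinarith
      rw [min_eq_right hBt]
      ring

/-- Two-point representation with one vertex, for arbitrary ordering of `p, q`. -/
lemma core2d (p q A B t : ℝ) (hp : 0 ≤ p) (hq : 0 ≤ q)
    (hA : 0 ≤ A) (hB : 0 ≤ B) (ht0 : 0 < t) (ht1 : t < 1) :
    ∃ v y φy α β : ℝ, (v = 0 ∨ v = 1) ∧ 0 ≤ y ∧ y ≤ 1 ∧ 0 ≤ φy ∧ φy ≤ 1 ∧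
      (1 - φy) * v + φy * y = t ∧
      (∀ x, 0 ≤ x → x ≤ 1 →
        (q + (p - q) * x) * min (A * x) (B * (1 - x)) ≤ α + β * x) ∧
      α + β * t =
        (1 - φy) * ((q + (p - q) * v) * min (A * v) (B * (1 - v)))
          + φy * ((q + (p - q) * y) * min (A * y) (B * (1 - y))) := by
  rcases le_total q p with hpq | hpq
  · obtain ⟨y, φy, α, β, hy0, hy1, hφ0, hφ1, hφy, hmaj, hval⟩ :=
      core1d p q A B t hq hpq hA hB ht0 ht1
    refine ⟨0, y, φy, α, β, Or.inl rfl, hy0, hy1, hφ0, hφ1, by rw [mul_zero, zero_add]; exact hφy,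
      hmaj, ?_⟩
    have h0 : min (A * 0) (B * (1 - 0)) = 0 := by
      rw [mul_zero]; exact min_eq_left (by linarith)
    rw [h0, mul_zero, mul_zero, zero_add]
    exact hval
  · obtain ⟨y', φy, α', β', hy0, hy1, hφ0, hφ1, hφy, hmaj, hval⟩ :=
      core1d q p B A (1 - t) hp hpq hB hA (by linarith) (by linarith)
    refine ⟨1, 1 - y', φy, α' + β', -β', Or.inr rfl, by linarith, by linarith, hφ0, hφ1,
      by linarith, ?_, ?_⟩
    · intro x hx0 hx1
      have := hmaj (1 - x) (by linarith) (by linarith)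
      have e1 : (p + (q - p) * (1 - x)) = (q + (p - q) * x) := by ring
      have e2 : A * (1 - (1 - x)) = A * x := by ring
      rw [e1, e2, min_comm] at this
      linarith [this]
    · have h1 : min (A * 1) (B * (1 - 1)) = 0 := by
        rw [mul_one, sub_self, mul_zero]; exact min_eq_right hA
      rw [h1, mul_zero, mul_zero, zero_add]
      have e2 : B * (1 - (1 - y')) = B * y' := by ring
      have e1 : (q + (p - q) * (1 - y')) = (p + (q - p) * y') := by ring
      rw [e1, e2, min_comm]
      have e3 : A * (1 - y') = A * (1 - y') := rfl
      calc α' + β' + -β' * t = α' + β' * (1 - t) := by ring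
        _ = φy * ((p + (q - p) * y') * min (B * y') (A * (1 - y'))) := hval


/-- for binary state and binary action, the supremum of the single-type
problem is attained by a family of at most two posteriors `{η^s, η^t}` in which `η^s`
is a point mass, so `C(η^s) = 0`: upon receiving signal `s` the buyer learns the state
exactly and is charged price `p_s = 0`. -/
theorem stmt14 (hA : Fintype.card A = 2) (u : Fin 2 → A → ℝ)
    (μ θ : Fin 2 → ℝ) (hμ : μ ∈ simplex 2) (hθ : θ ∈ simplex 2)
    (hθpos : ∀ ω, 0 < θ ω) :
    ∃ (φs φt : ℝ) (ηs ηt : Fin 2 → ℝ),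
      0 ≤ φs ∧ 0 ≤ φt ∧ ηs ∈ simplex 2 ∧ ηt ∈ simplex 2 ∧
      (∀ ω, φs * ηs ω + φt * ηt ω = θ ω) ∧
      φs * Ratio μ θ ηs * Cost u ηs + φt * Ratio μ θ ηt * Cost u ηt =
        sSup (ConcaveSet u μ θ) ∧
      (ηs = (fun ω => if ω = 0 then 1 else 0) ∨
        ηs = (fun ω => if ω = 1 then 1 else 0)) ∧
      Cost u ηs = 0 := by
  classical
  obtain ⟨A₀, B₀, hA₀, hB₀, hrep⟩ := cost_rep hA u
  have hθ0 : 0 < θ 0 := hθpos 0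
  have hθ1 : 0 < θ 1 := hθpos 1
  have hθs : θ 0 + θ 1 = 1 := by have h := hθ.2; rwa [Fin.sum_univ_two] at h
  set p := μ 0 / θ 0 with hpdef
  set q := μ 1 / θ 1 with hqdef
  have hp : 0 ≤ p := div_nonneg (hμ.1 0) hθ0.le
  have hq : 0 ≤ q := div_nonneg (hμ.1 1) hθ1.le
  have ht0 : 0 < θ 0 := hθ0
  have ht1 : θ 0 < 1 := by linarith
  -- the objective in 1-D form
  have hG : ∀ η ∈ simplex 2, Ratio μ θ η * Cost u η
      = (q + (p - q) * η 0) * min (A₀ * η 0) (B₀ * (1 - η 0)) := by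
    intro η hη
    have hη1 : η 1 = 1 - η 0 := by
      have h := hη.2; rw [Fin.sum_univ_two] at h; linarith
    have hRat : Ratio μ θ η = q + (p - q) * η 0 := by
      rw [Ratio, Fin.sum_univ_two, hη1, hpdef, hqdef]
      field_simp
      ring
    rw [hRat, hrep η hη, hη1]
  obtain ⟨v, y, φy, α, β, hv, hy0, hy1, hφ0, hφ1, hcon, hmaj, hval⟩ :=
    core2d p q A₀ B₀ (θ 0) hp hq hA₀ hB₀ ht0 ht1
  have hv0 : 0 ≤ v := by rcases hv with rfl | rfl <;> norm_num
  have hv1 : v ≤ 1 := by rcases hv with rfl | rfl <;> norm_num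
  set ηs : Fin 2 → ℝ := fun ω => if ω = 0 then v else 1 - v with hηs
  set ηt : Fin 2 → ℝ := fun ω => if ω = 0 then y else 1 - y with hηt
  have hs0 : ηs 0 = v := if_pos rfl
  have hs1 : ηs 1 = 1 - v := if_neg (by decide)
  have ht0' : ηt 0 = y := if_pos rfl
  have ht1' : ηt 1 = 1 - y := if_neg (by decide)
  have hηs_mem : ηs ∈ simplex 2 := by
    constructor
    · rw [Fin.forall_fin_two, hs0, hs1]
      exact ⟨hv0, by linarith⟩
    · rw [Fin.sum_univ_two, hs0, hs1]; ring
  have hηt_mem : ηt ∈ simplex 2 := by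
    constructor
    · rw [Fin.forall_fin_two, ht0', ht1']
      exact ⟨hy0, by linarith⟩
    · rw [Fin.sum_univ_two, ht0', ht1']; ring
  -- the budget constraint
  have hconstr : ∀ ω, (1 - φy) * ηs ω + φy * ηt ω = θ ω := by
    rw [Fin.forall_fin_two, hs0, hs1, ht0', ht1']
    exact ⟨hcon, by linarith⟩
  -- the value of the two-point family
  have hVAL : (1 - φy) * Ratio μ θ ηs * Cost u ηs + φy * Ratio μ θ ηt * Cost u ηt
      = α + β * θ 0 := by
    rw [mul_assoc, mul_assoc, hG ηs hηs_mem, hG ηt hηt_mem, hs0, ht0']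
    exact hval.symm
  -- the supremum equals this value
  have hub : ∀ w ∈ ConcaveSet u μ θ, w ≤ α + β * θ 0 := by
    rintro w ⟨m, φ, η, hφ, hη, hcons, rfl⟩
    have hsum1 : ∑ s, φ s = 1 := by
      calc ∑ s, φ s = ∑ s, ∑ ω, φ s * η s ω := by
            refine Finset.sum_congr rfl fun s _ => ?_
            rw [← Finset.mul_sum, (hη s).2, mul_one]
        _ = ∑ ω, ∑ s, φ s * η s ω := Finset.sum_comm
        _ = ∑ ω, θ ω := Finset.sum_congr rfl fun ω _ => hcons ω
        _ = 1 := hθ.2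
    have hsum0 : ∑ s, φ s * η s 0 = θ 0 := hcons 0
    calc ∑ s, φ s * Ratio μ θ (η s) * Cost u (η s)
        = ∑ s, φ s * ((q + (p - q) * η s 0) * min (A₀ * η s 0) (B₀ * (1 - η s 0))) := by
          refine Finset.sum_congr rfl fun s _ => ?_
          rw [mul_assoc, hG (η s) (hη s)]
      _ ≤ ∑ s, φ s * (α + β * η s 0) := by
          refine Finset.sum_le_sum fun s _ => ?_
          have h01 : 0 ≤ η s 0 := (hη s).1 0
          have h11 : η s 0 ≤ 1 := by
            have h := (hη s).2; rw [Fin.sum_univ_two] at h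
            have h1 := (hη s).1 1; linarith
          exact mul_le_mul_of_nonneg_left (hmaj _ h01 h11) (hφ s)
      _ = α * (∑ s, φ s) + β * (∑ s, φ s * η s 0) := by
          rw [Finset.mul_sum, Finset.mul_sum, ← Finset.sum_add_distrib]
          exact Finset.sum_congr rfl fun s _ => by ring
      _ = α + β * θ 0 := by rw [hsum1, hsum0, mul_one]
  have hmem : α + β * θ 0 ∈ ConcaveSet u μ θ := by
    refine ⟨2, ![1 - φy, φy], ![ηs, ηt], ?_, ?_, ?_, ?_⟩
    · rw [Fin.forall_fin_two]
      constructor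
      · show (0:ℝ) ≤ 1 - φy; linarith
      · show (0:ℝ) ≤ φy; exact hφ0
    · rw [Fin.forall_fin_two]
      exact ⟨hηs_mem, hηt_mem⟩
    · intro ω
      rw [Fin.sum_univ_two]
      show (1 - φy) * ηs ω + φy * ηt ω = θ ω
      exact hconstr ω
    · rw [Fin.sum_univ_two]
      show α + β * θ 0 =
        (1 - φy) * Ratio μ θ ηs * Cost u ηs + φy * Ratio μ θ ηt * Cost u ηt
      exact hVAL.symm
  have hsup_eq : sSup (ConcaveSet u μ θ) = α + β * θ 0 :=
    le_antisymm (csSup_le ⟨_, hmem⟩ hub) (le_csSup ⟨_, hub⟩ hmem)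
  refine ⟨1 - φy, φy, ηs, ηt, by linarith, hφ0, hηs_mem, hηt_mem, hconstr, ?_, ?_, ?_⟩
  · rw [hsup_eq]; exact hVAL
  · rcases hv with rfl | rfl
    · right
      rw [hηs]
      funext ω
      fin_cases ω <;> norm_num
    · left
      rw [hηs]
      funext ω
      fin_cases ω <;> norm_num
  · rw [hrep ηs hηs_mem, hs0, hs1]
    rcases hv with rfl | rfl
    · rw [mul_zero]
      exact min_eq_left (by linarith)
    · rw [sub_self, mul_zero]
      exact min_eq_right (by linarith)

end
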